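/- Let φ_1,…,φ_m ∈ ℝⁿ and y ∈ ℝⁿ; for A ⊆ {1,…,m} let P_A denote the orthogonal projection of ℝⁿ onto span{φ_j : j ∈ A} and r_A = y − P_A y. (a) If φ_i ∉ span{φ_j : j ∈ A} for every i ∉ A, then an index i ∉ A minimizes ‖r_{A∪{i}}‖₂ over i ∉ A if and only if it maximizes |⟨φ_i, r_A⟩| / ‖(Iₙ − P_A)φ_i‖₂ over i ∉ A. (b) If φ_i ∉ span{φ_j : j ∈ A∖{i}} for every i ∈ A, then an index i ∈ A minimizes ‖r_{A∖{i}}‖₂ over i ∈ A if and only if it minimizes |⟨φ_i, r_{A∖{i}}⟩| / ‖(Iₙ − P_{A∖{i}})φ_i‖₂ over i ∈ A. -/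

import Mathlib

/-- The least-squares residual `r_A = y − P_A y`, where `P_A` is the orthogonal projection
onto `span{φ_j : j ∈ A}`. -/
noncomputable def lsResidual {n m : ℕ} (φ : Fin m → EuclideanSpace ℝ (Fin n))
    (y : EuclideanSpace ℝ (Fin n)) (A : Finset (Fin m)) : EuclideanSpace ℝ (Fin n) :=
  y - (Submodule.orthogonalProjectionOnto (Submodule.span ℝ (φ '' (A : Set (Fin m)))) y :
    EuclideanSpace ℝ (Fin n))

private lemma key_ident {n m : ℕ} (φ : Fin m → EuclideanSpace ℝ (Fin n))
    (y : EuclideanSpace ℝ (Fin n)) (B : Finset (Fin m)) (i : Fin m)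
    (h : φ i ∉ Submodule.span ℝ (φ '' (B : Set (Fin m)))) :
    ‖lsResidual φ y (insert i B)‖ ^ 2 =
      ‖lsResidual φ y B‖ ^ 2 -
        (|(inner ℝ (φ i) (lsResidual φ y B) : ℝ)| / ‖lsResidual φ (φ i) B‖) ^ 2 := by
  set S := Submodule.span ℝ (φ '' (B : Set (Fin m))) with hS
  set u : EuclideanSpace ℝ (Fin n) := lsResidual φ (φ i) B with hu_def
  set r : EuclideanSpace ℝ (Fin n) := lsResidual φ y B with hr_def
  have hu_eq : u = φ i - (Submodule.orthogonalProjectionOnto S (φ i) : EuclideanSpace ℝ (Fin n)) := rfl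
  have hr_eq : r = y - (Submodule.orthogonalProjectionOnto S y : EuclideanSpace ℝ (Fin n)) := rfl
  have huS : u ∈ Sᗮ := by rw [hu_eq]; exact Submodule.sub_starProjection_mem_orthogonal _
  have hrS : r ∈ Sᗮ := by rw [hr_eq]; exact Submodule.sub_starProjection_mem_orthogonal _
  have hu0 : u ≠ 0 := by
    intro h0
    apply h
    have : φ i = (Submodule.orthogonalProjectionOnto S (φ i) : EuclideanSpace ℝ (Fin n)) := by
      have := sub_eq_zero.mp (hu_eq ▸ h0)
      exact this
    rw [this]; exact Submodule.coe_mem _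
  have hun : ‖u‖ ≠ 0 := norm_ne_zero_iff.mpr hu0
  -- the new span
  have hT : Submodule.span ℝ (φ '' ((insert i B : Finset (Fin m)) : Set (Fin m))) =
      S ⊔ Submodule.span ℝ {φ i} := by
    rw [Finset.coe_insert, Set.image_insert_eq, Submodule.span_insert, sup_comm]
  set c : ℝ := (inner ℝ u y : ℝ) / ‖u‖ ^ 2 with hc
  -- basic inner product facts
  have hur : (inner ℝ u r : ℝ) = (inner ℝ u y : ℝ) := by
    rw [hr_eq, inner_sub_right]
    have : (inner ℝ u ((Submodule.orthogonalProjectionOnto S y : EuclideanSpace ℝ (Fin n))) : ℝ) = 0 :=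
      Submodule.inner_left_of_mem_orthogonal (Submodule.coe_mem _) huS
    rw [this, sub_zero]
  have hphir : (inner ℝ (φ i) r : ℝ) = (inner ℝ u y : ℝ) := by
    have : φ i = u + (Submodule.orthogonalProjectionOnto S (φ i) : EuclideanSpace ℝ (Fin n)) := by rw [hu_eq]; abel
    rw [this, inner_add_left, hur]
    have : (inner ℝ ((Submodule.orthogonalProjectionOnto S (φ i) : EuclideanSpace ℝ (Fin n))) r : ℝ) = 0 :=
      Submodule.inner_right_of_mem_orthogonal (Submodule.coe_mem _) hrS
    rw [this, add_zero]
  have hcu : c * (inner ℝ u u : ℝ) = (inner ℝ u y : ℝ) := by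
    rw [real_inner_self_eq_norm_sq, hc]
    field_simp
  -- orthogonality of r - c • u to u
  have hkey : (inner ℝ (r - c • u) u : ℝ) = 0 := by
    have h1 : (inner ℝ r u : ℝ) = (inner ℝ u y : ℝ) := by rw [real_inner_comm]; exact hur
    rw [inner_sub_left, real_inner_smul_left, h1, hcu]; ring
  -- the projection onto the larger space
  have hp_mem : (Submodule.orthogonalProjectionOnto S y : EuclideanSpace ℝ (Fin n)) + c • u ∈
      Submodule.span ℝ (φ '' ((insert i B : Finset (Fin m)) : Set (Fin m))) := by
    rw [hT]
    apply Submodule.add_mem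
    · exact Submodule.mem_sup_left (Submodule.coe_mem _)
    · apply Submodule.smul_mem
      rw [hu_eq]
      apply Submodule.sub_mem
      · exact Submodule.mem_sup_right (Submodule.mem_span_singleton_self _)
      · exact Submodule.mem_sup_left (Submodule.coe_mem _)
  have hres : y - ((Submodule.orthogonalProjectionOnto S y : EuclideanSpace ℝ (Fin n)) + c • u) = r - c • u := by
    rw [hr_eq]; abel
  have hperp : r - c • u ∈ Sᗮ := Submodule.sub_mem _ hrS (Submodule.smul_mem _ _ huS)
  have h_orth : ∀ w ∈ Submodule.span ℝ (φ '' ((insert i B : Finset (Fin m)) : Set (Fin m))),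
      (inner ℝ (y - ((Submodule.orthogonalProjectionOnto S y : EuclideanSpace ℝ (Fin n)) + c • u)) w : ℝ) = 0 := by
    intro w hw
    rw [hres]
    rw [hT, Submodule.mem_sup] at hw
    obtain ⟨s, hs, t, ht, rfl⟩ := hw
    rw [Submodule.mem_span_singleton] at ht
    obtain ⟨a, rfl⟩ := ht
    rw [inner_add_right, real_inner_smul_right]
    have h1 : (inner ℝ (r - c • u) s : ℝ) =  0 :=
      Submodule.inner_left_of_mem_orthogonal hs hperp
    have h2 : (inner ℝ (r - c • u) (φ i) : ℝ) = 0 := by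
      have hφ : φ i = u + (Submodule.orthogonalProjectionOnto S (φ i) : EuclideanSpace ℝ (Fin n)) := by rw [hu_eq]; abel
      rw [hφ, inner_add_right, hkey]
      have : (inner ℝ (r - c • u) ((Submodule.orthogonalProjectionOnto S (φ i) : EuclideanSpace ℝ (Fin n))) : ℝ) = 0 :=
        Submodule.inner_left_of_mem_orthogonal (Submodule.coe_mem _) hperp
      rw [this]; ring
    rw [h1, h2]; ring
  have hproj : (Submodule.orthogonalProjectionOnto
      (Submodule.span ℝ (φ '' ((insert i B : Finset (Fin m)) : Set (Fin m)))) y : EuclideanSpace ℝ (Fin n)) =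
      (Submodule.orthogonalProjectionOnto S y : EuclideanSpace ℝ (Fin n)) + c • u :=
    Submodule.eq_starProjection_of_mem_of_inner_eq_zero hp_mem h_orth
  have hres2 : lsResidual φ y (insert i B) = r - c • u := by
    rw [lsResidual, hproj, hres]
  -- Pythagoras
  have hpyth : ‖r‖ ^ 2 = ‖r - c • u‖ ^ 2 + ‖c • u‖ ^ 2 := by
    have h := norm_add_sq_real (r - c • u) (c • u)
    rw [sub_add_cancel, real_inner_smul_right, hkey, mul_zero] at h
    linarith
  have hnorm_cu : ‖c • u‖ ^ 2 = (inner ℝ u y : ℝ) ^ 2 / ‖u‖ ^ 2 := by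
    rw [norm_smul, mul_pow, hc]
    rw [Real.norm_eq_abs, sq_abs]
    field_simp
  rw [hres2, hphir, div_pow, sq_abs]
  rw [hnorm_cu] at hpyth
  linarith

private lemma compare_forward {n m : ℕ} (φ : Fin m → EuclideanSpace ℝ (Fin n))
    (y : EuclideanSpace ℝ (Fin n)) (B : Finset (Fin m)) (i j : Fin m)
    (hi : φ i ∉ Submodule.span ℝ (φ '' (B : Set (Fin m))))
    (hj : φ j ∉ Submodule.span ℝ (φ '' (B : Set (Fin m)))) :
    ‖lsResidual φ y (insert i B)‖ ≤ ‖lsResidual φ y (insert j B)‖ ↔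
      |(inner ℝ (φ j) (lsResidual φ y B) : ℝ)| / ‖lsResidual φ (φ j) B‖ ≤
        |(inner ℝ (φ i) (lsResidual φ y B) : ℝ)| / ‖lsResidual φ (φ i) B‖ := by
  have hI := key_ident φ y B i hi
  have hJ := key_ident φ y B j hj
  have hFi : 0 ≤ |(inner ℝ (φ i) (lsResidual φ y B) : ℝ)| / ‖lsResidual φ (φ i) B‖ :=
    div_nonneg (abs_nonneg _) (norm_nonneg _)
  have hFj : 0 ≤ |(inner ℝ (φ j) (lsResidual φ y B) : ℝ)| / ‖lsResidual φ (φ j) B‖ :=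
    div_nonneg (abs_nonneg _) (norm_nonneg _)
  rw [← pow_le_pow_iff_left₀ (norm_nonneg _) (norm_nonneg _) (two_ne_zero),
    ← pow_le_pow_iff_left₀ hFj hFi (two_ne_zero), hI, hJ]
  constructor <;> intro h <;> linarith

/-- corollary of Lemma 5 of the paper: the forward and backward stepwise
selection rules coincide with the normalized-correlation rules;
note `(I − P_A)φ_i = lsResidual φ (φ i) A`. -/
theorem stepwise_rules_equivalence {n m : ℕ} (φ : Fin m → EuclideanSpace ℝ (Fin n))
    (y : EuclideanSpace ℝ (Fin n)) (A : Finset (Fin m)) :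
    ((∀ i ∉ A, φ i ∉ Submodule.span ℝ (φ '' (A : Set (Fin m)))) →
      ∀ i ∉ A,
        ((∀ j ∉ A, ‖lsResidual φ y (insert i A)‖ ≤ ‖lsResidual φ y (insert j A)‖) ↔
          (∀ j ∉ A,
            |(inner ℝ (φ j) (lsResidual φ y A) : ℝ)| / ‖lsResidual φ (φ j) A‖ ≤
              |(inner ℝ (φ i) (lsResidual φ y A) : ℝ)| / ‖lsResidual φ (φ i) A‖))) ∧
    ((∀ i ∈ A, φ i ∉ Submodule.span ℝ (φ '' ((A.erase i) : Set (Fin m)))) →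
      ∀ i ∈ A,
        ((∀ j ∈ A, ‖lsResidual φ y (A.erase i)‖ ≤ ‖lsResidual φ y (A.erase j)‖) ↔
          (∀ j ∈ A,
            |(inner ℝ (φ i) (lsResidual φ y (A.erase i)) : ℝ)| /
                ‖lsResidual φ (φ i) (A.erase i)‖ ≤
              |(inner ℝ (φ j) (lsResidual φ y (A.erase j)) : ℝ)| /
                ‖lsResidual φ (φ j) (A.erase j)‖))) := by
  constructor
  · intro h1 i hi
    exact forall₂_congr fun j hj => compare_forward φ y A i j (h1 i hi) (h1 j hj)
  · intro h2 i hi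
    -- for each k ∈ A : ‖r_{A.erase k}‖² = ‖r_A‖² + G k ²
    have key : ∀ k ∈ A, ‖lsResidual φ y (A.erase k)‖ ^ 2 =
        ‖lsResidual φ y A‖ ^ 2 +
          (|(inner ℝ (φ k) (lsResidual φ y (A.erase k)) : ℝ)| /
            ‖lsResidual φ (φ k) (A.erase k)‖) ^ 2 := by
      intro k hk
      have := key_ident φ y (A.erase k) k (h2 k hk)
      rw [Finset.insert_erase hk] at this
      linarith
    refine forall₂_congr fun j hj => ?_
    have hI := key i hi
    have hJ := key j hj
    have hGi : 0 ≤ |(inner ℝ (φ i) (lsResidual φ y (A.erase i)) : ℝ)| /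
        ‖lsResidual φ (φ i) (A.erase i)‖ := div_nonneg (abs_nonneg _) (norm_nonneg _)
    have hGj : 0 ≤ |(inner ℝ (φ j) (lsResidual φ y (A.erase j)) : ℝ)| /
        ‖lsResidual φ (φ j) (A.erase j)‖ := div_nonneg (abs_nonneg _) (norm_nonneg _)
    rw [← pow_le_pow_iff_left₀ (norm_nonneg _) (norm_nonneg _) (two_ne_zero),
      ← pow_le_pow_iff_left₀ hGi hGj (two_ne_zero), hI, hJ]
    constructor <;> intro h <;> linarith
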